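/- Let B be a Boolean algebra of subsets of a set S, let m be a finitely additive measure on B, and let C ⊆ B∖{∅} be such that m(c) ≥ M for all c ∈ C. Then the intersection number of C is at least M. -/

import Mathlib

universe u

/-- A Boolean algebra of subsets of `S`: a collection of subsets containing
`∅` and closed under union and complement. -/
structure IsSetBooleanAlgebra {S : Type u} (B : Set (Set S)) : Prop where
  empty_mem : ∅ ∈ B
  union_mem : ∀ a b : Set S, a ∈ B → b ∈ B → a ∪ b ∈ B
  compl_mem : ∀ a : Set S, a ∈ B → aᶜ ∈ B

/-- A finitely additive (probability) measure on a Boolean set algebra `B`. -/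
structure IsFinAddMeasureOn {S : Type u} (B : Set (Set S)) (m : Set S → ℝ) : Prop where
  map_empty : m ∅ = 0
  map_univ : m Set.univ = 1
  nonneg : ∀ a ∈ B, 0 ≤ m a
  mono : ∀ a ∈ B, ∀ b ∈ B, a ⊆ b → m a ≤ m b
  add : ∀ a ∈ B, ∀ b ∈ B, a ∩ b = ∅ → m (a ∪ b) = m a + m b

/-- The largest size of a set `J ⊆ {1,…,n}` of indices such that
`⋂_{i ∈ J} c_i` is nonempty. -/
noncomputable def maxInterCard {S : Type u} (n : ℕ) (c : Fin n → Set S) : ℕ :=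
  sSup {k : ℕ | ∃ J : Finset (Fin n), J.card = k ∧ (⋂ i ∈ J, c i).Nonempty}

/-- The number `κ_s = k/n` associated to the finite sequence
`s = ⟨c_1,…,c_n⟩`, where `k` is the largest size of a set `J ⊆ {1,…,n}` with
`⋂_{i ∈ J} c_i ≠ ∅`. The intersection number of a family `C` is the infimum
of `kappa n c` over all finite sequences `c` in `C`. -/
noncomputable def kappa {S : Type u} (n : ℕ) (c : Fin n → Set S) : ℝ :=
  (maxInterCard n c : ℝ) / (n : ℝ)

/-- `κ` is a lower bound for the intersection number of `C`, i.e.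
`κ ≤ κ_s` for every finite sequence `s` in `C`. (The intersection number of
`C` is at least `κ`.) -/
def InterNumberLB {S : Type u} (C : Set (Set S)) (κ : ℝ) : Prop :=
  ∀ n : ℕ, 0 < n → ∀ c : Fin n → Set S, (∀ i, c i ∈ C) → κ ≤ kappa n c

/-- A fragmentation of a Boolean set algebra `B`: an increasing sequence of
subsets of `B ∖ {∅}`, each upward closed in `B`, whose union is `B ∖ {∅}`. -/
structure IsSetFragmentation {S : Type u} (B : Set (Set S)) (C : ℕ → Set (Set S)) : Prop where
  mono : ∀ n, C n ⊆ C (n + 1)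
  subset : ∀ n, C n ⊆ B \ {∅}
  upward : ∀ n : ℕ, ∀ a ∈ C n, ∀ b ∈ B, a ⊆ b → b ∈ C n
  covers : ∀ a ∈ B, a ≠ ∅ → ∃ n, a ∈ C n

/-- If `m` is a finitely additive measure on a Boolean set algebra `B` and
`C ⊆ B ∖ {∅}` satisfies `m(c) ≥ M` for all `c ∈ C`, then the intersection
number of `C` is at least `M`. -/
lemma aux_univ_mem {S : Type u} {B : Set (Set S)} (hB : IsSetBooleanAlgebra B) :
    Set.univ ∈ B := by
  simpa using hB.compl_mem ∅ hB.empty_mem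

lemma aux_inter_mem {S : Type u} {B : Set (Set S)} (hB : IsSetBooleanAlgebra B)
    {a b : Set S} (ha : a ∈ B) (hb : b ∈ B) : a ∩ b ∈ B := by
  have h : a ∩ b = (aᶜ ∪ bᶜ)ᶜ := by rw [Set.compl_union, compl_compl, compl_compl]
  rw [h]
  exact hB.compl_mem _ (hB.union_mem _ _ (hB.compl_mem _ ha) (hB.compl_mem _ hb))

lemma aux_biInter_mem {S : Type u} {B : Set (Set S)} (hB : IsSetBooleanAlgebra B)
    {ι : Type} [DecidableEq ι] (t : Finset ι) (f : ι → Set S)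
    (hf : ∀ i ∈ t, f i ∈ B) : (⋂ i ∈ t, f i) ∈ B := by
  induction t using Finset.induction with
  | empty => simpa using aux_univ_mem hB
  | insert _ _ ha ih =>
    rw [Finset.set_biInter_insert]
    exact aux_inter_mem hB (hf _ (Finset.mem_insert_self _ _))
      (ih fun i hi => hf i (Finset.mem_insert_of_mem hi))

lemma aux_m_biUnion {S : Type u} {B : Set (Set S)} (hB : IsSetBooleanAlgebra B)
    {m : Set S → ℝ} (hm : IsFinAddMeasureOn B m)
    {ι : Type} [DecidableEq ι] (t : Finset ι) (f : ι → Set S)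
    (hf : ∀ i ∈ t, f i ∈ B)
    (hd : ∀ i ∈ t, ∀ j ∈ t, i ≠ j → f i ∩ f j = ∅) :
    (⋃ i ∈ t, f i) ∈ B ∧ m (⋃ i ∈ t, f i) = ∑ i ∈ t, m (f i) := by
  induction t using Finset.induction with
  | empty => simpa using ⟨hB.empty_mem, hm.map_empty⟩
  | @insert a s ha ih =>
    have hfs : ∀ i ∈ s, f i ∈ B := fun i hi => hf i (Finset.mem_insert_of_mem hi)
    have hds : ∀ i ∈ s, ∀ j ∈ s, i ≠ j → f i ∩ f j = ∅ := fun i hi j hj =>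
      hd i (Finset.mem_insert_of_mem hi) j (Finset.mem_insert_of_mem hj)
    obtain ⟨hUB, hUm⟩ := ih hfs hds
    rw [Finset.set_biUnion_insert]
    have hfa : f a ∈ B := hf a (Finset.mem_insert_self _ _)
    have hdisj : f a ∩ ⋃ i ∈ s, f i = ∅ := by
      ext x
      simp only [Set.mem_inter_iff, Set.mem_iUnion, Set.mem_empty_iff_false, iff_false]
      rintro ⟨hxa, i, hi, hxi⟩
      have hx : x ∈ f a ∩ f i := ⟨hxa, hxi⟩
      rw [hd a (Finset.mem_insert_self _ _) i (Finset.mem_insert_of_mem hi)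
        (by rintro rfl; exact ha hi)] at hx
      exact hx
    refine ⟨hB.union_mem _ _ hfa hUB, ?_⟩
    rw [hm.add _ hfa _ hUB hdisj, hUm, Finset.sum_insert ha]

theorem interNumber_ge_of_measure_ge {S : Type u} [Nonempty S]
    (B : Set (Set S)) (hB : IsSetBooleanAlgebra B)
    (m : Set S → ℝ) (hm : IsFinAddMeasureOn B m)
    (C : Set (Set S)) (hC : C ⊆ B \ {∅})
    (M : ℝ) (hM : ∀ c ∈ C, M ≤ m c) :
    InterNumberLB C M := by
  intro n hn c hc
  classical
  have hcB : ∀ i, c i ∈ B := fun i => (hC (hc i)).1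
  set K := {k : ℕ | ∃ J : Finset (Fin n), J.card = k ∧ (⋂ i ∈ J, c i).Nonempty} with hK
  have hKbdd : BddAbove K := by
    refine ⟨n, fun k hk => ?_⟩
    obtain ⟨J, hJ, -⟩ := hk
    simpa [← hJ] using (Finset.card_le_univ J).trans_eq (by simp)
  set k := maxInterCard n c with hkdef
  -- the atoms
  set A : (Fin n → Bool) → Set S := fun σ => ⋂ i, (if σ i then c i else (c i)ᶜ) with hA
  have hmemA : ∀ σ x, x ∈ A σ ↔ ∀ i, x ∈ (if σ i then c i else (c i)ᶜ) := by
    intro σ x; simp [hA]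
  have hAB : ∀ σ, A σ ∈ B := by
    intro σ
    have : A σ = ⋂ i ∈ (Finset.univ : Finset (Fin n)), (if σ i then c i else (c i)ᶜ) := by
      simp [hA]
    rw [this]
    exact aux_biInter_mem hB _ _ (fun i _ => by
      by_cases h : σ i <;> simp [h, hcB i, hB.compl_mem _ (hcB i)])
  have hAdisj : ∀ σ τ, σ ≠ τ → A σ ∩ A τ = ∅ := by
    intro σ τ hστ
    ext x
    simp only [Set.mem_inter_iff, Set.mem_empty_iff_false, iff_false]
    rintro ⟨hxσ, hxτ⟩
    apply hστ
    funext i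
    have h1 := (hmemA σ x).1 hxσ i
    have h2 := (hmemA τ x).1 hxτ i
    by_cases hσ : σ i <;> by_cases hτ : τ i <;> simp [hσ, hτ] at h1 h2 ⊢
    · exact h2 h1
    · exact h1 h2
  -- each point lies in its atom
  have hsig : ∀ x : S, x ∈ A (fun i => decide (x ∈ c i)) := by
    intro x
    rw [hmemA]
    intro i
    by_cases h : x ∈ c i <;> simp [h]
  -- total mass 1
  have hpart : (⋃ σ ∈ (Finset.univ : Finset (Fin n → Bool)), A σ) = Set.univ := by
    apply Set.eq_univ_of_forall
    intro x
    exact Set.mem_biUnion (Finset.mem_univ _) (hsig x)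
  obtain ⟨-, hsum1⟩ := aux_m_biUnion hB hm (Finset.univ : Finset (Fin n → Bool)) A
    (fun σ _ => hAB σ) (fun σ _ τ _ h => hAdisj σ τ h)
  rw [hpart, hm.map_univ] at hsum1
  -- decomposition of each c i
  have hci : ∀ i, c i = ⋃ σ ∈ Finset.univ.filter (fun σ : Fin n → Bool => σ i = true), A σ := by
    intro i
    ext x
    simp only [Set.mem_iUnion, Finset.mem_filter, Finset.mem_univ, true_and, exists_prop]
    constructor
    · intro hx
      exact ⟨fun j => decide (x ∈ c j), by simp [hx], hsig x⟩
    · rintro ⟨σ, hσi, hxσ⟩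
      have := (hmemA σ x).1 hxσ i
      simpa [hσi] using this
  have hmci : ∀ i, m (c i) =
      ∑ σ ∈ Finset.univ.filter (fun σ : Fin n → Bool => σ i = true), m (A σ) := by
    intro i
    obtain ⟨-, h⟩ := aux_m_biUnion hB hm _ A (fun σ _ => hAB σ) (fun σ _ τ _ h => hAdisj σ τ h)
    rw [hci i, h]
  -- count bound
  have hcnt : ∀ σ : Fin n → Bool, (A σ).Nonempty →
      ((Finset.univ.filter (fun i => σ i = true)).card : ℕ) ≤ k := by
    intro σ hne
    apply le_csSup hKbdd
    refine ⟨Finset.univ.filter (fun i => σ i = true), rfl, ?_⟩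
    obtain ⟨x, hx⟩ := hne
    refine ⟨x, ?_⟩
    simp only [Set.mem_iInter, Finset.mem_filter, Finset.mem_univ, true_and]
    intro i hi
    have := (hmemA σ x).1 hx i
    simpa [hi] using this
  -- sum over i
  have key : (n : ℝ) * M ≤ (k : ℝ) := by
    have h1 : (n : ℝ) * M ≤ ∑ i : Fin n, m (c i) := by
      calc (n : ℝ) * M = ∑ _i : Fin n, M := by simp [mul_comm]
        _ ≤ ∑ i : Fin n, m (c i) := Finset.sum_le_sum fun i _ => hM _ (hc i)
    have h2 : ∑ i : Fin n, m (c i)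
        = ∑ σ : Fin n → Bool, ((Finset.univ.filter (fun i => σ i = true)).card : ℝ) * m (A σ) := by
      simp_rw [hmci, Finset.sum_filter]
      rw [Finset.sum_comm]
      congr 1
      funext σ
      rw [← Finset.sum_filter, Finset.sum_const, nsmul_eq_mul]
    have h3 : ∑ σ : Fin n → Bool, ((Finset.univ.filter (fun i => σ i = true)).card : ℝ) * m (A σ)
        ≤ ∑ σ : Fin n → Bool, (k : ℝ) * m (A σ) := by
      apply Finset.sum_le_sum
      intro σ _
      rcases Set.eq_empty_or_nonempty (A σ) with he | hne
      · rw [he, hm.map_empty, mul_zero, mul_zero]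
      · exact mul_le_mul_of_nonneg_right (by exact_mod_cast hcnt σ hne) (hm.nonneg _ (hAB σ))
    have h4 : ∑ σ : Fin n → Bool, (k : ℝ) * m (A σ) = (k : ℝ) := by
      rw [← Finset.mul_sum, ← hsum1, mul_one]
    linarith [h1, h2 ▸ h1, h3, h4]
  rw [kappa, le_div_iff₀ (by exact_mod_cast hn)]
  calc M * n = (n : ℝ) * M := by ring
    _ ≤ (k : ℝ) := key
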